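/- arXiv:2005.03108 — 2 statements merged into one kernel-verified Lean document; each statement's English description precedes it below -/
import Mathlib

section
/- Let β : ℝ² → ℝ be convex and superlinear, and α = β* its Fenchel conjugate. Then for any h₀ ∈ ℝ² and any real c ≥ min α, there exist λ₀ ∈ ℝ and a subgradient p₀ ∈ ∂β(λ₀h₀) with α(p₀) = c, provided h₀ ≠ 0. -/
open RealInnerProductSpace

/-- The plane `ℝ² ≅ H₁(T²,ℝ)`. -/
abbrev V2 : Type := EuclideanSpace ℝ (Fin 2)

/-- The subdifferential of a function `β : ℝ² → ℝ` at a point `h`. -/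
def subdiff (β : V2 → ℝ) (h : V2) : Set V2 :=
  {p : V2 | ∀ h' : V2, β h + ⟪p, h' - h⟫ ≤ β h'}

lemma hb_lift (β : V2 → ℝ) (hconv : ConvexOn ℝ Set.univ β) (hcont : Continuous β)
    (h₀ : V2) (lam s : ℝ)
    (hsub : ∀ μ : ℝ, β (lam • h₀) + s * (μ - lam) ≤ β (μ • h₀)) :
    ∃ p : V2, p ∈ subdiff β (lam • h₀) ∧ ⟪p, h₀⟫ = s := by
  set S : Set (V2 × ℝ) := {z | β z.1 < z.2} with hSdef
  set T : Set (V2 × ℝ) := {z | ∃ μ : ℝ, z = (μ • h₀, β (lam • h₀) + s * (μ - lam))} with hTdef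
  have hSopen : IsOpen S := isOpen_lt (hcont.comp continuous_fst) continuous_snd
  have hSconv : Convex ℝ S := by
    rintro ⟨x, y⟩ hx ⟨x', y'⟩ hx' a b ha hb hab
    simp only [hSdef, Set.mem_setOf_eq] at hx hx' ⊢
    have hβ := hconv.2 (Set.mem_univ x) (Set.mem_univ x') ha hb hab
    simp only [smul_eq_mul] at hβ ⊢
    rcases eq_or_lt_of_le ha with h0 | h0
    · have hb1 : b = 1 := by linarith
      have := hx'
      calc β (a • x + b • x') ≤ a * β x + b * β x' := hβ
        _ < a * y + b * y' := by
            rw [← h0, hb1]; simpa using hx'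
    · calc β (a • x + b • x') ≤ a * β x + b * β x' := hβ
        _ < a * y + b * y' := by
            have h1 : a * β x < a * y := by exact (mul_lt_mul_iff_right₀ h0).2 hx
            have h2 : b * β x' ≤ b * y' := mul_le_mul_of_nonneg_left hx'.le hb
            linarith
  have hTconv : Convex ℝ T := by
    rintro z ⟨μ, rfl⟩ w ⟨μ', rfl⟩ a b ha hb hab
    refine ⟨a * μ + b * μ', Prod.ext ?_ ?_⟩
    · show a • (μ • h₀) + b • (μ' • h₀) = (a * μ + b * μ') • h₀
      rw [smul_smul, smul_smul, ← add_smul]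
    · show a • (β (lam • h₀) + s * (μ - lam)) + b • (β (lam • h₀) + s * (μ' - lam))
        = β (lam • h₀) + s * ((a * μ + b * μ') - lam)
      simp only [smul_eq_mul]
      linear_combination (β (lam • h₀) - s * lam) * hab
  have hdisj : Disjoint S T := by
    rw [Set.disjoint_right]
    rintro z ⟨μ, rfl⟩
    simp only [hSdef, Set.mem_setOf_eq, not_lt]
    exact hsub μ
  obtain ⟨f, u, hf₁, hf₂⟩ := geometric_hahn_banach_open hSconv hSopen hTconv hdisj
  set q : V2 := (InnerProductSpace.toDual ℝ V2).symm
      (f.comp (ContinuousLinearMap.inl ℝ V2 ℝ)) with hq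
  set r : ℝ := f (0, 1) with hrdef
  have hdecomp : ∀ (x : V2) (y : ℝ), f (x, y) = ⟪q, x⟫ + y * r := by
    intro x y
    have h1 : (x, y) = (x, (0 : ℝ)) + y • ((0 : V2), (1 : ℝ)) := by
      simp [Prod.ext_iff]
    rw [h1, map_add, map_smul]
    have h2 : (⟪q, x⟫ : ℝ) = f (x, 0) := by
      rw [hq, InnerProductSpace.toDual_symm_apply]
      rfl
    rw [h2]
    simp [smul_eq_mul, mul_comm]
    exact Or.inl hrdef.symm
  have hS' : ∀ (x : V2) (y : ℝ), β x < y → ⟪q, x⟫ + y * r < u := by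
    intro x y hy
    have := hf₁ (x, y) hy
    rwa [hdecomp] at this
  have hT' : ∀ μ : ℝ, u ≤ ⟪q, μ • h₀⟫ + (β (lam • h₀) + s * (μ - lam)) * r := by
    intro μ
    have := hf₂ (μ • h₀, β (lam • h₀) + s * (μ - lam)) ⟨μ, rfl⟩
    rwa [hdecomp] at this
  have hrle : r ≤ 0 := by
    by_contra hr
    push_neg at hr
    set y : ℝ := max (β 0 + 1) (u / r) with hy
    have h1 : β 0 < y := lt_of_lt_of_le (by linarith) (le_max_left _ _)
    have h2 := hS' 0 y h1
    rw [inner_zero_right] at h2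
    have h3 : u / r ≤ y := le_max_right _ _
    rw [div_le_iff₀ hr] at h3
    linarith
  have hrneg : r < 0 := by
    rcases lt_or_eq_of_le hrle with h | h
    · exact h
    · exfalso
      have hq0 : q = 0 := by
        by_contra hqne
        have hb : ∀ x : V2, ⟪q, x⟫ < u := by
          intro x
          have := hS' x (β x + 1) (by linarith)
          rw [h] at this
          simpa using this
        have hnq : (0 : ℝ) < ‖q‖ ^ 2 := by
          have := norm_pos_iff.mpr hqne
          positivity
        have := hb (((|u| + 1) / ‖q‖ ^ 2) • q)
        rw [real_inner_smul_right, real_inner_self_eq_norm_sq] at this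
        rw [div_mul_cancel₀ _ (ne_of_gt hnq)] at this
        have : u ≤ |u| := le_abs_self u
        linarith [le_abs_self u, this]
      have h1 := hT' lam
      have h2 := hS' 0 (β 0 + 1) (by linarith)
      rw [hq0] at h1 h2
      simp [h] at h1 h2
      linarith
  have hr' : (0 : ℝ) < -r := by linarith
  have key1 : ∀ x : V2, ⟪q, x⟫ + β x * r ≤ u := by
    intro x
    by_contra hcon
    push_neg at hcon
    have hε : (0 : ℝ) < (⟪q, x⟫ + β x * r - u) / (-r) := div_pos (by linarith) hr' 
    have := hS' x (β x + (⟪q, x⟫ + β x * r - u) / (-r)) (by linarith)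
    have hcancel : (⟪q, x⟫ + β x * r - u) / (-r) * r = -(⟪q, x⟫ + β x * r - u) := by
      field_simp
      rw [div_self hrneg.ne]
    nlinarith [this]
  have key2 : u ≤ ⟪q, lam • h₀⟫ + β (lam • h₀) * r := by
    have := hT' lam
    simpa using this
  refine ⟨(-r)⁻¹ • q, ?_, ?_⟩
  · intro h'
    rw [real_inner_smul_left, inner_sub_right]
    have h1 := key1 h'
    have h2 : ⟪q, h'⟫ - ⟪q, lam • h₀⟫ ≤ (β h' - β (lam • h₀)) * (-r) := by nlinarith
    have h3 : (-r)⁻¹ * (⟪q, h'⟫ - ⟪q, lam • h₀⟫) ≤ β h' - β (lam • h₀) := by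
      rw [inv_mul_eq_div, div_le_iff₀ hr']
      linarith
    linarith
  · have ht : ⟪q, h₀⟫ = s * (-r) := by
      have hp := key1 (lam • h₀)
      have hplus := hT' (lam + 1)
      have hminus := hT' (lam - 1)
      rw [real_inner_smul_right] at hplus hminus
      rw [real_inner_smul_right] at hp
      nlinarith [hplus, hminus, hp]
    rw [real_inner_smul_left, ht, mul_comm s (-r), ← mul_assoc,
      inv_mul_cancel₀ (ne_of_gt hr'), one_mul]

lemma fenchel_eq (β : V2 → ℝ) (α : V2 → ℝ)
    (hα : ∀ p : V2, IsLUB {r : ℝ | ∃ h : V2, r = ⟪p, h⟫ - β h} (α p))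
    (h : V2) (p : V2) (hp : p ∈ subdiff β h) : α p = ⟪p, h⟫ - β h := by
  refine (hα p).unique (IsGreatest.isLUB ⟨⟨h, rfl⟩, ?_⟩)
  rintro x ⟨h', rfl⟩
  have := hp h'
  rw [inner_sub_right] at this
  linarith

/-- Let `β : ℝ² → ℝ` be convex and superlinear and `α = β*` its Fenchel conjugate.
Then for any nonzero `h₀ ∈ ℝ²` and any real `c ≥ min α`, there exist `lam₀ ∈ ℝ` and a
subgradient `p₀ ∈ ∂β(lam₀ h₀)` with `α(p₀) = c`. -/
theorem exists_subgradient_on_line_with_alpha_eq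
    (β : V2 → ℝ)
    (hconv : ConvexOn ℝ Set.univ β)
    (hsuper : ∀ C : ℝ, ∃ R : ℝ, ∀ h : V2, R ≤ ‖h‖ → C * ‖h‖ ≤ β h)
    (α : V2 → ℝ)
    (hα : ∀ p : V2, IsLUB {r : ℝ | ∃ h : V2, r = ⟪p, h⟫ - β h} (α p))
    (h₀ : V2) (hh₀ : h₀ ≠ 0)
    (c : ℝ) (hc : sInf (Set.range α) ≤ c) :
    ∃ (lam₀ : ℝ) (p₀ : V2), p₀ ∈ subdiff β (lam₀ • h₀) ∧ α p₀ = c := by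
  have hcont : Continuous β := by
    rw [← continuousOn_univ]
    exact hconv.continuousOn isOpen_univ
  set φ : ℝ → ℝ := fun t => β (t • h₀) with hφdef
  have hφconv : ConvexOn ℝ Set.univ φ := by
    refine ⟨convex_univ, fun x _ y _ a b ha hb hab => ?_⟩
    have := hconv.2 (Set.mem_univ (x • h₀)) (Set.mem_univ (y • h₀)) ha hb hab
    simpa [hφdef, smul_smul, ← add_smul] using this
  have hφcont : Continuous φ := hcont.comp (continuous_id.smul continuous_const)
  have hn : (0 : ℝ) < ‖h₀‖ := norm_pos_iff.mpr hh₀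
  have hφsuper : ∀ C : ℝ, ∃ R : ℝ, ∀ t : ℝ, R ≤ |t| → C * |t| ≤ φ t := by
    intro C
    obtain ⟨R, hR⟩ := hsuper (C / ‖h₀‖)
    refine ⟨R / ‖h₀‖, fun t ht => ?_⟩
    have h1 : ‖t • h₀‖ = |t| * ‖h₀‖ := by rw [norm_smul, Real.norm_eq_abs]
    have h2 : R ≤ ‖t • h₀‖ := by
      rw [h1]
      calc R = R / ‖h₀‖ * ‖h₀‖ := by field_simp
        _ ≤ |t| * ‖h₀‖ := by gcongr
    have h3 := hR _ h2
    rw [h1] at h3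
    calc C * |t| = C / ‖h₀‖ * (|t| * ‖h₀‖) := by field_simp
      _ ≤ φ t := h3
  -- existence of a global maximizer of μ ↦ s*μ - φ μ
  have hmax : ∀ s : ℝ, ∃ t : ℝ, ∀ μ : ℝ, s * μ - φ μ ≤ s * t - φ t := by
    intro s
    obtain ⟨R, hR⟩ := hφsuper (|s| + 1)
    set M : ℝ := max R (|φ 0| + 1) with hM
    have hM0 : (0 : ℝ) < M := lt_of_lt_of_le (by positivity) (le_max_right _ _)
    have hMneg : -M ≤ M := by linarith
    obtain ⟨t, htmem, htmax⟩ := (isCompact_Icc (a := -M) (b := M)).exists_isMaxOn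
      (Set.nonempty_Icc.mpr hMneg)
      ((continuous_const.mul continuous_id).sub hφcont).continuousOn
    refine ⟨t, fun μ => ?_⟩
    by_cases hμ : μ ∈ Set.Icc (-M) M
    · exact htmax hμ
    · have h0mem : (0 : ℝ) ∈ Set.Icc (-M) M := by
        constructor <;> linarith
      have h0 := htmax h0mem
      simp only [Set.mem_Icc, not_and_or, not_le] at hμ
      have habs : M < |μ| := by
        rcases hμ with h | h
        · rw [abs_of_neg (by linarith)]; linarith
        · rw [abs_of_pos (by linarith)]; linarith
      have hRμ : R ≤ |μ| := le_trans (le_trans (le_max_left _ _) habs.le) le_rfl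
      have hsup := hR μ hRμ
      have hsμ : s * μ ≤ |s| * |μ| := by
        calc s * μ ≤ |s * μ| := le_abs_self _
          _ = |s| * |μ| := abs_mul s μ
      have : s * μ - φ μ ≤ -|μ| := by nlinarith
      have h2 : s * 0 - φ 0 ≤ s * t - φ t := h0
      have h3 : -|μ| ≤ -M := by linarith
      have h4 : -M ≤ -(|φ 0| + 1) := by
        have := le_max_right R (|φ 0| + 1); linarith
      have h5 : -(|φ 0| + 1) ≤ s * 0 - φ 0 := by
        have := le_abs_self (φ 0); linarith
      linarith
  set F : ℝ → ℝ := fun s => Classical.choose (hmax s) with hF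
  have hFspec : ∀ s μ : ℝ, s * μ - φ μ ≤ s * F s - φ (F s) :=
    fun s => Classical.choose_spec (hmax s)
  set A : ℝ → ℝ := fun s => s * F s - φ (F s) with hA
  have hAconv : ConvexOn ℝ Set.univ A := by
    refine ⟨convex_univ, fun s₁ _ s₂ _ a b ha hb hab => ?_⟩
    set t := F (a • s₁ + b • s₂) with htdef
    have h1 : A (a • s₁ + b • s₂) = a * (s₁ * t - φ t) + b * (s₂ * t - φ t) := by
      simp only [hA, smul_eq_mul, ← htdef]
      have : a * φ t + b * φ t = φ t := by rw [← add_mul, hab, one_mul]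
      ring_nf
      nlinarith [this]
    rw [h1]
    have h2 : a * (s₁ * t - φ t) ≤ a * A s₁ :=
      mul_le_mul_of_nonneg_left (hFspec s₁ t) ha
    have h3 : b * (s₂ * t - φ t) ≤ b * A s₂ :=
      mul_le_mul_of_nonneg_left (hFspec s₂ t) hb
    simp only [smul_eq_mul]
    linarith
  have hAcont : Continuous A := by
    rw [← continuousOn_univ]
    exact hAconv.continuousOn isOpen_univ
  have hlow : -β 0 ≤ c := by
    have h1 : ∀ p : V2, -β 0 ≤ α p := by
      intro p
      refine (hα p).1 ⟨0, ?_⟩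
      simp
    have h2 : -β 0 ≤ sInf (Set.range α) :=
      le_csInf ⟨α 0, Set.mem_range_self 0⟩ (by rintro _ ⟨p, rfl⟩; exact h1 p)
    linarith
  have hφ0 : φ 0 = β 0 := by simp [hφdef]
  set Sl : Set ℝ := {y | ∃ μ : ℝ, μ < 0 ∧ y = (φ μ - φ 0) / μ} with hSl
  have hSlne : Sl.Nonempty := ⟨(φ (-1) - φ 0) / (-1), -1, by norm_num⟩
  have hslope : ∀ ν : ℝ, ν < 0 → ∀ μ : ℝ, 0 < μ → (φ ν - φ 0) / ν ≤ (φ μ - φ 0) / μ := by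
    intro ν hν μ hμ
    have h := hφconv.slope_mono_adjacent (Set.mem_univ ν) (Set.mem_univ μ) hν hμ
    have he : (φ ν - φ 0) / ν = (φ 0 - φ ν) / (0 - ν) := by
      rw [zero_sub, ← neg_div_neg_eq]; ring_nf
    rw [he]
    simpa using h
  have hSlbdd : BddAbove Sl := by
    refine ⟨(φ 1 - φ 0) / 1, ?_⟩
    rintro y ⟨μ, hμ, rfl⟩
    exact hslope μ hμ 1 one_pos
  set s₀ : ℝ := sSup Sl with hs₀
  have hs₀sub : ∀ μ : ℝ, φ 0 + s₀ * μ ≤ φ μ := by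
    intro μ
    rcases lt_trichotomy μ 0 with h | h | h
    · have hmem : (φ μ - φ 0) / μ ∈ Sl := ⟨μ, h, rfl⟩
      have h2 := le_csSup hSlbdd hmem
      rw [div_le_iff_of_neg h] at h2
      linarith
    · simp [h]
    · have hub : s₀ ≤ (φ μ - φ 0) / μ := by
        apply csSup_le hSlne
        rintro y ⟨ν, hν, rfl⟩
        exact hslope ν hν μ h
      rw [le_div_iff₀ h] at hub
      linarith
  have hAs₀ : A s₀ ≤ -φ 0 := by
    show s₀ * F s₀ - φ (F s₀) ≤ -φ 0
    have := hs₀sub (F s₀)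
    linarith
  set b : ℝ := max s₀ (c + φ 1) with hbdef
  have hs₀b : s₀ ≤ b := le_max_left _ _
  have hAb : c ≤ A b := by
    have h1 : b * 1 - φ 1 ≤ A b := hFspec b 1
    have h2 : c + φ 1 ≤ b := le_max_right _ _
    linarith
  have hcmem : c ∈ Set.Icc (A s₀) (A b) := ⟨by rw [hφ0] at hAs₀; linarith, hAb⟩
  obtain ⟨s, hsmem, hsc⟩ := intermediate_value_Icc hs₀b hAcont.continuousOn hcmem
  set t := F s with htdef
  have hsubφ : ∀ μ : ℝ, φ t + s * (μ - t) ≤ φ μ := by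
    intro μ
    have := hFspec s μ
    rw [← htdef] at this
    nlinarith [this]
  obtain ⟨p, hp, hps⟩ := hb_lift β hconv hcont h₀ t s hsubφ
  refine ⟨t, p, hp, ?_⟩
  have hfe := fenchel_eq β α hα (t • h₀) p hp
  rw [real_inner_smul_right, hps] at hfe
  have hAsc : s * t - φ t = c := hsc
  have hβφ : β (t • h₀) = φ t := rfl
  rw [hfe, hβφ]
  linarith
end

section
/- Let β : ℝ² → ℝ be convex and superlinear and fix a nonzero vector h₀. Then the set S(h₀) = ⋃_{λ∈ℝ} ∂β(λh₀) of all subgradients at points of the line ℝh₀ is an unbounded connected subset of ℝ², and the restriction of α = β* to S(h₀) is unbounded above. -/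
open RealInnerProductSpace

open Topology

lemma beta_cont (β : V2 → ℝ) (hconv : ConvexOn ℝ Set.univ β) : Continuous β := by
  rw [← continuousOn_univ]
  exact hconv.continuousOn isOpen_univ

lemma subdiff_convex (β : V2 → ℝ) (x : V2) : Convex ℝ (subdiff β x) := by
  intro p hp q hq a b ha hb hab
  intro h'
  have h1 := hp h'
  have h2 := hq h'
  have hin : ⟪a • p + b • q, h' - x⟫ = a * ⟪p, h' - x⟫ + b * ⟪q, h' - x⟫ := by
    simp [inner_add_left, real_inner_smul_left]
  show β x + ⟪a • p + b • q, h' - x⟫ ≤ β h'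
  rw [hin]
  have e1 := mul_le_mul_of_nonneg_left h1 ha
  have e2 := mul_le_mul_of_nonneg_left h2 hb
  set u : ℝ := ⟪p, h' - x⟫
  set w : ℝ := ⟪q, h' - x⟫
  have e3 : (a+b) * β x = β x := by rw [hab, one_mul]
  have e4 : (a+b) * β h' = β h' := by rw [hab, one_mul]
  linarith [e1, e2, e3, e4]

lemma subdiff_nonempty (β : V2 → ℝ) (hconv : ConvexOn ℝ Set.univ β) (x₀ : V2) :
    (subdiff β x₀).Nonempty := by
  have hc := beta_cont β hconv
  set E : Set (V2 × ℝ) := {q | β q.1 < q.2} with hE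
  have hEopen : IsOpen E := isOpen_lt (hc.comp continuous_fst) continuous_snd
  have hEconv : Convex ℝ E := by
    intro a ha b hb s t hs ht hst
    simp only [hE, Set.mem_setOf_eq] at *
    have h2 := hconv.2 (Set.mem_univ a.1) (Set.mem_univ b.1) hs ht hst
    calc β (s • a + t • b).1 = β (s • a.1 + t • b.1) := rfl
      _ ≤ s * β a.1 + t * β b.1 := h2
      _ < s * a.2 + t * b.2 := by
          rcases hs.lt_or_eq with hs' | hs'
          · rcases ht.lt_or_eq with ht' | ht'
            · nlinarith
            · rw [← ht'] at hst ⊢; nlinarith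
          · rw [← hs'] at hst ⊢; nlinarith
      _ = (s • a + t • b).2 := by simp
  have hx₀ : (x₀, β x₀) ∉ E := by simp [hE]
  obtain ⟨f, hf⟩ := geometric_hahn_banach_open_point hEconv hEopen hx₀
  set c : ℝ := f (0, 1) with hcdef
  have hsplit : ∀ (x : V2) (t : ℝ), f (x, t) = f (x, 0) + t * c := by
    intro x t
    have hxt : (x, t) = (x, (0:ℝ)) + t • ((0:V2), (1:ℝ)) := by
      simp [Prod.ext_iff]
    rw [hxt, map_add, map_smul]; simp [hcdef]
  have key : ∀ x : V2, ∀ t : ℝ, β x < t → f (x,0) + t * c < f (x₀,0) + β x₀ * c := by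
    intro x t ht
    have h3 := hf (x, t) ht
    rwa [hsplit x t, hsplit x₀ (β x₀)] at h3
  have hc0 : c < 0 := by
    have h4 := key x₀ (β x₀ + 1) (by linarith)
    nlinarith
  have key2 : ∀ x : V2, f (x,0) + β x * c ≤ f (x₀,0) + β x₀ * c := by
    intro x
    by_contra hcon
    push_neg at hcon
    set ε := (f (x,0) + β x * c - (f (x₀,0) + β x₀ * c)) / (2 * (-c)) with hεdef
    have hε : 0 < ε := by
      apply div_pos (by linarith) (by linarith)
    have h5 := key x (β x + ε) (by linarith)
    have h2c : (2:ℝ) * -c ≠ 0 := by linarith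
    have hεm : ε * (2 * (-c)) = f (x,0) + β x * c - (f (x₀,0) + β x₀ * c) := by
      rw [hεdef, div_mul_cancel₀ _ h2c]
    nlinarith
  set φ : V2 →L[ℝ] ℝ := (-c)⁻¹ • (f.comp (ContinuousLinearMap.inl ℝ V2 ℝ)) with hφ
  set p : V2 := (InnerProductSpace.toDual ℝ V2).symm φ with hp
  refine ⟨p, fun h' => ?_⟩
  have hip : ⟪p, h' - x₀⟫ = (-c)⁻¹ * (f (h', 0) - f (x₀, 0)) := by
    rw [hp, InnerProductSpace.toDual_symm_apply, hφ]
    simp only [ContinuousLinearMap.smul_apply, ContinuousLinearMap.comp_apply,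
      ContinuousLinearMap.inl_apply, smul_eq_mul]
    rw [show ((h' - x₀ : V2), (0:ℝ)) = (h', (0:ℝ)) - (x₀, (0:ℝ)) by simp [Prod.ext_iff]]
    rw [map_sub]
  rw [hip]
  have h6 := key2 h'
  have h7 : f (h', 0) - f (x₀, 0) ≤ (β h' - β x₀) * (-c) := by nlinarith
  have h8 : (-c)⁻¹ * (f (h', 0) - f (x₀, 0)) ≤ β h' - β x₀ := by
    rw [inv_mul_le_iff₀ (by linarith)]
    nlinarith
  linarith

lemma subdiff_bound (β : V2 → ℝ) (hconv : ConvexOn ℝ Set.univ β) (r : ℝ) :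
    ∃ M : ℝ, ∀ x : V2, ‖x‖ ≤ r → ∀ p ∈ subdiff β x, ‖p‖ ≤ M := by
  have hc := beta_cont β hconv
  obtain ⟨M₀, hM₀⟩ := (isCompact_closedBall (0:V2) (r+1)).exists_bound_of_continuousOn
    hc.continuousOn
  refine ⟨max (2 * M₀) 0, fun x hx p hp => ?_⟩
  rcases eq_or_ne p 0 with rfl | hp0
  · simp
  have hpn : 0 < ‖p‖ := norm_pos_iff.mpr hp0
  set u : V2 := ‖p‖⁻¹ • p with hu
  have hun : ‖u‖ = 1 := by
    rw [hu, norm_smul, norm_inv, norm_norm, inv_mul_cancel₀ hpn.ne']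
  have hxmem : x ∈ Metric.closedBall (0:V2) (r+1) := by
    rw [Metric.mem_closedBall, dist_zero_right]; linarith
  have hxumem : x + u ∈ Metric.closedBall (0:V2) (r+1) := by
    rw [Metric.mem_closedBall, dist_zero_right]
    calc ‖x + u‖ ≤ ‖x‖ + ‖u‖ := norm_add_le _ _
      _ ≤ r + 1 := by rw [hun]; linarith
  have hipu : ⟪p, u⟫ = ‖p‖ := by
    rw [hu, real_inner_smul_right, real_inner_self_eq_norm_sq]
    field_simp
  have h1 := hp (x + u)
  rw [add_sub_cancel_left, hipu] at h1
  have h2 := hM₀ x hxmem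
  have h3 := hM₀ (x + u) hxumem
  have h4 : |β x| ≤ M₀ := h2
  have h5 : |β (x+u)| ≤ M₀ := h3
  have := abs_le.mp h4
  have := abs_le.mp h5
  refine le_max_of_le_left ?_
  linarith

lemma graph_closed (β : V2 → ℝ) (hconv : ConvexOn ℝ Set.univ β) :
    IsClosed {q : V2 × V2 | q.2 ∈ subdiff β q.1} := by
  have hc := beta_cont β hconv
  have heq : {q : V2 × V2 | q.2 ∈ subdiff β q.1} =
      ⋂ h' : V2, {q : V2 × V2 | β q.1 + ⟪q.2, h' - q.1⟫ ≤ β h'} := by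
    ext q; simp [subdiff, Set.mem_iInter]
  rw [heq]
  refine isClosed_iInter fun h' => isClosed_le ?_ continuous_const
  exact (hc.comp continuous_fst).add
    (continuous_snd.inner (continuous_const.sub continuous_fst))

lemma exists_big (β : V2 → ℝ) (hconv : ConvexOn ℝ Set.univ β)
    (hsuper : ∀ C : ℝ, ∃ R : ℝ, ∀ h : V2, R ≤ ‖h‖ → C * ‖h‖ ≤ β h)
    (h₀ : V2) (hh₀ : h₀ ≠ 0) (N : ℝ) :
    ∃ lam : ℝ, ∃ p ∈ subdiff β (lam • h₀), N ≤ ‖p‖ := by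
  obtain ⟨R, hR⟩ := hsuper (N + 1)
  have hn : 0 < ‖h₀‖ := norm_pos_iff.mpr hh₀
  set r : ℝ := max R (|β 0|) + 1 with hr
  have hr0 : 0 < r := by positivity
  set lam : ℝ := r / ‖h₀‖ with hlam
  have hnorm : ‖lam • h₀‖ = r := by
    rw [norm_smul, Real.norm_eq_abs, hlam, abs_div, abs_of_pos hr0, abs_of_pos hn,
      div_mul_cancel₀ _ hn.ne']
  obtain ⟨p, hp⟩ := subdiff_nonempty β hconv (lam • h₀)
  refine ⟨lam, p, hp, ?_⟩
  have h1 := hp 0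
  rw [zero_sub, inner_neg_right] at h1
  have h2 : (N + 1) * ‖lam • h₀‖ ≤ β (lam • h₀) := by
    apply hR
    rw [hnorm]; exact le_trans (le_max_left _ _) (by linarith)
  have h3 : ⟪p, lam • h₀⟫ ≤ ‖p‖ * ‖lam • h₀‖ := real_inner_le_norm _ _
  have h4 : β 0 ≤ r := le_trans (le_abs_self _) (le_trans (le_max_right _ _) (by linarith))
  rw [hnorm] at h2 h3
  have h6 : N * r ≤ ‖p‖ * r := by nlinarith
  exact le_of_mul_le_mul_right h6 hr0

/-- Let `β : ℝ² → ℝ` be convex and superlinear, `α = β*` its Fenchel conjugate, and fix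
a nonzero vector `h₀`. Then the set `S(h₀) = ⋃_{λ∈ℝ} ∂β(λh₀)` of all subgradients at
points of the line `ℝh₀` is an unbounded connected subset of `ℝ²`, and the restriction
of `α` to `S(h₀)` is unbounded above. -/
theorem subgradients_on_line_unbounded_connected
    (β : V2 → ℝ)
    (hconv : ConvexOn ℝ Set.univ β)
    (hsuper : ∀ C : ℝ, ∃ R : ℝ, ∀ h : V2, R ≤ ‖h‖ → C * ‖h‖ ≤ β h)
    (α : V2 → ℝ)
    (hα : ∀ p : V2, IsLUB {r : ℝ | ∃ h : V2, r = ⟪p, h⟫ - β h} (α p))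
    (h₀ : V2) (hh₀ : h₀ ≠ 0) :
    ¬ Bornology.IsBounded (⋃ lam : ℝ, subdiff β (lam • h₀)) ∧
    IsConnected (⋃ lam : ℝ, subdiff β (lam • h₀)) ∧
    ¬ BddAbove (α '' (⋃ lam : ℝ, subdiff β (lam • h₀))) := by
  set S : Set V2 := ⋃ lam : ℝ, subdiff β (lam • h₀) with hS
  have hbig : ∀ N : ℝ, ∃ p ∈ S, N ≤ ‖p‖ := by
    intro N
    obtain ⟨lam, p, hp, hpn⟩ := exists_big β hconv hsuper h₀ hh₀ N
    exact ⟨p, Set.mem_iUnion.mpr ⟨lam, hp⟩, hpn⟩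
  refine ⟨?_, ?_, ?_⟩
  · -- unbounded
    intro hbdd
    obtain ⟨C, hC⟩ := Bornology.IsBounded.exists_norm_le hbdd
    obtain ⟨p, hpS, hpn⟩ := hbig (C + 1)
    have := hC p hpS
    linarith
  · -- connected
    constructor
    · obtain ⟨p, hp⟩ := subdiff_nonempty β hconv ((0:ℝ) • h₀)
      exact ⟨p, Set.mem_iUnion.mpr ⟨0, hp⟩⟩
    intro u v hu hv hsub hSu hSv
    by_contra hq
    rw [Set.not_nonempty_iff_eq_empty] at hq
    -- dichotomy
    have hAsub : ∀ lam : ℝ, subdiff β (lam • h₀) ⊆ S := fun lam =>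
      Set.subset_iUnion (fun l : ℝ => subdiff β (l • h₀)) lam
    have dich : ∀ lam : ℝ, subdiff β (lam • h₀) ⊆ u ∨ subdiff β (lam • h₀) ⊆ v := by
      intro lam
      by_contra hcon
      push_neg at hcon
      obtain ⟨⟨a, ha, hau⟩, ⟨b, hb, hbv⟩⟩ :
          ((subdiff β (lam • h₀)) \ u).Nonempty ∧ ((subdiff β (lam • h₀)) \ v).Nonempty := by
        constructor
        · rcases Set.not_subset.mp hcon.1 with ⟨a, ha, hau⟩; exact ⟨a, ha, hau⟩
        · rcases Set.not_subset.mp hcon.2 with ⟨b, hb, hbv⟩; exact ⟨b, hb, hbv⟩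
      have hAu : (subdiff β (lam • h₀) ∩ u).Nonempty := by
        refine ⟨b, hb, ?_⟩
        rcases hsub (hAsub lam hb) with h | h
        · exact h
        · exact absurd h hbv
      have hAv : (subdiff β (lam • h₀) ∩ v).Nonempty := by
        refine ⟨a, ha, ?_⟩
        rcases hsub (hAsub lam ha) with h | h
        · exact absurd h hau
        · exact h
      have hpre := (subdiff_convex β (lam • h₀)).isPreconnected
      obtain ⟨z, hz⟩ := hpre u v hu hv ((hAsub lam).trans hsub) hAu hAv
      have : z ∈ S ∩ (u ∩ v) := ⟨hAsub lam hz.1, hz.2⟩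
      rw [hq] at this
      exact this
    -- closedness helper
    have hclosedgen : ∀ (w w' : Set V2), IsOpen w' →
        (∀ lam : ℝ, subdiff β (lam • h₀) ⊆ w ∨ subdiff β (lam • h₀) ⊆ w') →
        (S ∩ (w ∩ w') = ∅) →
        IsClosed {lam : ℝ | subdiff β (lam • h₀) ⊆ w} := by
      intro w w' hw' hdich hdisj
      apply IsSeqClosed.isClosed
      intro x l hx hxl
      obtain ⟨r, hr⟩ := isBounded_iff_forall_norm_le.mp
        ((Metric.isBounded_range_of_tendsto x hxl).insert l)
      choose p hp using fun n => subdiff_nonempty β hconv (x n • h₀)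
      obtain ⟨M, hM⟩ := subdiff_bound β hconv (r * ‖h₀‖)
      have hxr : ∀ n, ‖x n • h₀‖ ≤ r * ‖h₀‖ := by
        intro n
        rw [norm_smul, Real.norm_eq_abs]
        exact mul_le_mul_of_nonneg_right
          (by
            have := hr (x n) (Set.mem_insert_of_mem _ (Set.mem_range_self n))
            rwa [Real.norm_eq_abs] at this) (norm_nonneg _)
      have hpM : ∀ n, p n ∈ Metric.closedBall (0:V2) M := by
        intro n
        rw [Metric.mem_closedBall, dist_zero_right]
        exact hM _ (hxr n) _ (hp n)
      obtain ⟨q, hqmem, φ, hφ, hqlim⟩ :=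
        (isCompact_closedBall (0:V2) M).tendsto_subseq hpM
      have hxφ : Filter.Tendsto (fun n => x (φ n) • h₀) Filter.atTop (𝓝 (l • h₀)) :=
        (hxl.comp hφ.tendsto_atTop).smul_const h₀
      have hgraph : q ∈ subdiff β (l • h₀) := by
        have hseq := (graph_closed β hconv).isSeqClosed
          (x := fun n => (x (φ n) • h₀, p (φ n))) (p := (l • h₀, q))
          (fun n => hp (φ n)) (hxφ.prodMk_nhds hqlim)
        exact hseq
      rcases hdich l with hcase | hcase
      · exact hcase
      · exfalso
        have hqw' : q ∈ w' := hcase hgraph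
        have hev := hqlim.eventually (hw'.mem_nhds hqw')
        obtain ⟨n, hn⟩ := hev.exists
        have hmem : p (φ n) ∈ S ∩ (w ∩ w') :=
          ⟨hAsub _ (hp (φ n)), hx (φ n) (hp (φ n)), hn⟩
        rw [hdisj] at hmem
        exact hmem
    have hTuC : IsClosed {lam : ℝ | subdiff β (lam • h₀) ⊆ u} := hclosedgen u v hv dich hq
    have hTvC : IsClosed {lam : ℝ | subdiff β (lam • h₀) ⊆ v} :=
      hclosedgen v u hu (fun lam => (dich lam).symm)
        (by rw [Set.inter_comm u v] at hq; exact hq)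
    have hcover : (Set.univ : Set ℝ) ⊆ {lam : ℝ | subdiff β (lam • h₀) ⊆ u} ∪
        {lam : ℝ | subdiff β (lam • h₀) ⊆ v} := fun lam _ => dich lam
    have hmemT : ∀ (w w' : Set V2), S ∩ (w ∩ w') = ∅ → (S ∩ w).Nonempty →
        (∀ lam : ℝ, subdiff β (lam • h₀) ⊆ w ∨ subdiff β (lam • h₀) ⊆ w') →
        (Set.univ ∩ {lam : ℝ | subdiff β (lam • h₀) ⊆ w}).Nonempty := by
      intro w w' hdisj hne hdich
      obtain ⟨pw, hpwS, hpww⟩ := hne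
      obtain ⟨lam, hlam⟩ := Set.mem_iUnion.mp hpwS
      refine ⟨lam, trivial, ?_⟩
      rcases hdich lam with h | h
      · exact h
      · exfalso
        have : pw ∈ S ∩ (w ∩ w') := ⟨hpwS, hpww, h hlam⟩
        rw [hdisj] at this
        exact this
    have hTune := hmemT u v hq hSu dich
    have hTvne := hmemT v u (by rw [Set.inter_comm u v] at hq; exact hq) hSv
      (fun lam => (dich lam).symm)
    obtain ⟨lam0, -, hl_u, hl_v⟩ := isPreconnected_closed_iff.mp isPreconnected_univ
      _ _ hTuC hTvC hcover hTune hTvne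
    obtain ⟨p0, hp0⟩ := subdiff_nonempty β hconv (lam0 • h₀)
    have : p0 ∈ S ∩ (u ∩ v) := ⟨hAsub lam0 hp0, hl_u hp0, hl_v hp0⟩
    rw [hq] at this
    exact this
  · -- α unbounded above
    have hc := beta_cont β hconv
    obtain ⟨M₁, hM₁⟩ := (isCompact_closedBall (0:V2) 1).exists_bound_of_continuousOn
      hc.continuousOn
    intro hbdd
    obtain ⟨B, hB⟩ := hbdd
    obtain ⟨p, hpS, hpn⟩ := hbig (max (B + M₁ + 1) 1)
    have hp1 : 1 ≤ ‖p‖ := le_trans (le_max_right _ _) hpn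
    have hp0 : p ≠ 0 := by
      intro h; rw [h, norm_zero] at hp1; linarith
    have hppos : 0 < ‖p‖ := by linarith
    set w : V2 := ‖p‖⁻¹ • p with hw
    have hwn : ‖w‖ = 1 := by
      rw [hw, norm_smul, norm_inv, norm_norm, inv_mul_cancel₀ hppos.ne']
    have hwmem : w ∈ Metric.closedBall (0:V2) 1 := by
      rw [Metric.mem_closedBall, dist_zero_right, hwn]
    have hipw : ⟪p, w⟫ = ‖p‖ := by
      rw [hw, real_inner_smul_right, real_inner_self_eq_norm_sq]
      field_simp
    have hrin : (⟪p, w⟫ - β w) ∈ {r : ℝ | ∃ h : V2, r = ⟪p, h⟫ - β h} := ⟨w, rfl⟩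
    have hle : ⟪p, w⟫ - β w ≤ α p := (hα p).1 hrin
    have hβw : |β w| ≤ M₁ := hM₁ w hwmem
    have := abs_le.mp hβw
    have hαp : B + 1 ≤ α p := by
      rw [hipw] at hle
      have : max (B + M₁ + 1) 1 ≤ ‖p‖ := hpn
      have h2 : B + M₁ + 1 ≤ ‖p‖ := le_trans (le_max_left _ _) this
      linarith
    have : α p ≤ B := hB ⟨p, hpS, rfl⟩
    linarith
end
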